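/- arXiv:2106.15760 — 2 statements merged into one kernel-verified Lean document; each statement's English description precedes it below -/
import Mathlib

section
/- The map DT ↦ C(DT) that sends a binary discourse tree over [0,n] to its generalized splitting-decision set is injective: two binary discourse trees over [0,n] with the same decision set are equal. Moreover, the EDU segmentation is recoverable from the decision set alone: the leaves (EDUs) of DT are exactly the spans (i,j) such that (i,j,j) ∈ C(DT). (This makes precise Proposition 2: a binary discourse tree of a text of n tokens is faithfully represented by splitting decisions (i,j) → k with i < k ≤ j, where k = j marks the end of splitting, i.e., an EDU.) -/
/-- A binary discourse tree over the boundary interval `[i, j]`: leaves are labeled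
with arbitrary spans `(i, j)` with `i < j` (the EDUs), and an internal node over
span `(i, j)` splits at some `k` with `i < k < j` into children over `(i, k)` and
`(k, j)`.  A binary discourse tree over `[0, n]` is a term of type `DTree 0 n`. -/
inductive DTree : ℕ → ℕ → Type where
  | leaf : (i j : ℕ) → i < j → DTree i j
  | node : (i k j : ℕ) → i < k → k < j → DTree i k → DTree k j → DTree i j

/-- The generalized splitting-decision set `C(DT)`: triples `(i, j, k)` with
`i < k < j` for internal nodes splitting span `(i, j)` at `k`, together with a
triple `(i, j, j)` for every leaf labeled `(i, j)`. -/
def DTree.splits : {i j : ℕ} → DTree i j → Finset (ℕ × ℕ × ℕ)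
  | _, _, .leaf i j _ => {(i, j, j)}
  | _, _, .node i k j _ _ l r => insert (i, j, k) (l.splits ∪ r.splits)

/-- The set of leaf spans (EDUs) of a binary discourse tree. -/
def DTree.edus : {i j : ℕ} → DTree i j → Finset (ℕ × ℕ)
  | _, _, .leaf i j _ => {(i, j)}
  | _, _, .node _ _ _ _ _ l r => l.edus ∪ r.edus

lemma DTree.mem_splits_bounds : ∀ {i j : ℕ} (T : DTree i j) {a b c : ℕ},
    (a, b, c) ∈ T.splits → i ≤ a ∧ a < b ∧ b ≤ j := by
  intro i j T
  induction T with
  | leaf i j h =>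
    intro a b c hm
    simp only [DTree.splits, Finset.mem_singleton, Prod.mk.injEq] at hm
    obtain ⟨rfl, rfl, rfl⟩ := hm
    exact ⟨le_rfl, h, le_rfl⟩
  | node i k j hik hkj l r ihl ihr =>
    intro a b c hm
    simp only [DTree.splits, Finset.mem_insert, Finset.mem_union, Prod.mk.injEq] at hm
    rcases hm with ⟨rfl, rfl, rfl⟩ | h | h
    · exact ⟨le_rfl, lt_trans hik hkj, le_rfl⟩
    · obtain ⟨h1, h2, h3⟩ := ihl h
      exact ⟨h1, h2, le_trans h3 (le_of_lt hkj)⟩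
    · obtain ⟨h1, h2, h3⟩ := ihr h
      exact ⟨le_trans (le_of_lt hik) h1, h2, h3⟩

/-- The union of the split sets of the two children of a node determines each
child's split set, since their spans lie in disjoint halves. -/
lemma DTree.union_splits_inj {i k j : ℕ} (s s' : DTree i k) (t t' : DTree k j)
    (h : s.splits ∪ t.splits = s'.splits ∪ t'.splits) :
    s.splits = s'.splits ∧ t.splits = t'.splits := by
  have sep : ∀ {x : ℕ × ℕ × ℕ} (u : DTree i k) (v : DTree k j),
      x ∈ u.splits → x ∈ v.splits → False := by
    rintro ⟨a, b, c⟩ u v hu hv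
    obtain ⟨-, -, h3⟩ := u.mem_splits_bounds hu
    obtain ⟨h1, h2, -⟩ := v.mem_splits_bounds hv
    exact absurd (lt_of_le_of_lt (h3.trans h1) h2) (lt_irrefl b)
  constructor
  · ext x
    constructor
    · intro hx
      have : x ∈ s'.splits ∪ t'.splits := h ▸ Finset.mem_union_left _ hx
      rcases Finset.mem_union.1 this with hx' | hx'
      · exact hx'
      · exact absurd (sep s t' hx hx') (fun f => f)
    · intro hx
      have : x ∈ s.splits ∪ t.splits := h.symm ▸ Finset.mem_union_left _ hx
      rcases Finset.mem_union.1 this with hx' | hx'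
      · exact hx'
      · exact absurd (sep s' t hx hx') (fun f => f)
  · ext x
    constructor
    · intro hx
      have : x ∈ s'.splits ∪ t'.splits := h ▸ Finset.mem_union_right _ hx
      rcases Finset.mem_union.1 this with hx' | hx'
      · exact absurd (sep s' t hx' hx) (fun f => f)
      · exact hx'
    · intro hx
      have : x ∈ s.splits ∪ t.splits := h.symm ▸ Finset.mem_union_right _ hx
      rcases Finset.mem_union.1 this with hx' | hx'
      · exact absurd (sep s t' hx' hx) (fun f => f)
      · exact hx'

lemma DTree.splits_inj : ∀ {i j : ℕ} (T₁ T₂ : DTree i j),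
    T₁.splits = T₂.splits → T₁ = T₂ := by
  intro i j T₁
  induction T₁ with
  | leaf i j h =>
    intro T₂ heq
    cases T₂ with
    | leaf i j h' => rfl
    | node i k j hik hkj l r =>
      exfalso
      have : (i, j, k) ∈ (DTree.leaf i j h).splits := by
        rw [heq]; simp [DTree.splits]
      simp only [DTree.splits, Finset.mem_singleton, Prod.mk.injEq] at this
      exact absurd this.2.2 (ne_of_lt hkj)
  | node i k j hik hkj l r ihl ihr =>
    intro T₂ heq
    cases T₂ with
    | leaf i j h' =>
      exfalso
      have : (i, j, k) ∈ (DTree.leaf i j h').splits := by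
        rw [← heq]; simp [DTree.splits]
      simp only [DTree.splits, Finset.mem_singleton, Prod.mk.injEq] at this
      exact absurd this.2.2 (ne_of_lt hkj)
    | node i k' j hik' hk'j l' r' =>
      have hk : k = k' := by
        have hm : (i, j, k) ∈ (DTree.node i k' j hik' hk'j l' r').splits := by
          rw [← heq]; simp [DTree.splits]
        simp only [DTree.splits, Finset.mem_insert, Finset.mem_union, Prod.mk.injEq] at hm
        rcases hm with ⟨-, -, rfl⟩ | h | h
        · rfl
        · obtain ⟨-, h2, h3⟩ := l'.mem_splits_bounds h
          exact absurd h3 (not_le_of_gt hk'j)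
        · obtain ⟨h1, -, -⟩ := r'.mem_splits_bounds h
          exact absurd h1 (not_le_of_gt hik')
      subst hk
      have hnot : ∀ (s : DTree i k) (t : DTree k j), (i, j, k) ∉ s.splits ∪ t.splits := by
        intro s t hm
        rcases Finset.mem_union.1 hm with h | h
        · obtain ⟨-, -, h3⟩ := s.mem_splits_bounds h
          exact absurd h3 (not_le_of_gt hkj)
        · obtain ⟨h1, -, -⟩ := t.mem_splits_bounds h
          exact absurd h1 (not_le_of_gt hik)
      have hunion : l.splits ∪ r.splits = l'.splits ∪ r'.splits := by
        simp only [DTree.splits] at heq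
        calc l.splits ∪ r.splits
            = (insert (i, j, k) (l.splits ∪ r.splits)).erase (i, j, k) :=
              (Finset.erase_insert (hnot l r)).symm
          _ = (insert (i, j, k) (l'.splits ∪ r'.splits)).erase (i, j, k) := by rw [heq]
          _ = l'.splits ∪ r'.splits := Finset.erase_insert (hnot l' r')
      obtain ⟨hl, hr⟩ := DTree.union_splits_inj l l' r r' hunion
      rw [ihl l' hl, ihr r' hr]

lemma DTree.mem_edus_iff : ∀ {i' j' : ℕ} (T : DTree i' j') (i j : ℕ),
    (i, j) ∈ T.edus ↔ (i, j, j) ∈ T.splits := by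
  intro i' j' T
  induction T with
  | leaf a b h =>
    intro i j
    simp [DTree.edus, DTree.splits, Prod.ext_iff]
  | node a k b hak hkb l r ihl ihr =>
    intro i j
    simp only [DTree.edus, DTree.splits, Finset.mem_union, Finset.mem_insert,
      Prod.mk.injEq, ihl, ihr]
    constructor
    · intro h; tauto
    · rintro (⟨rfl, rfl, rfl⟩ | h | h)
      · exact absurd rfl (ne_of_lt hkb)
      · exact Or.inl h
      · exact Or.inr h

/-- The map `DT ↦ C(DT)` sending a binary discourse tree over
`[0, n]` to its generalized splitting-decision set is injective, and the EDU
segmentation is recoverable from the decision set alone: the leaves (EDUs) of `DT`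
are exactly the spans `(i, j)` such that `(i, j, j) ∈ C(DT)`. -/
theorem dtree_splits_injective_and_edus (n : ℕ) (hn : 1 ≤ n) :
    (∀ T₁ T₂ : DTree 0 n, T₁.splits = T₂.splits → T₁ = T₂) ∧
    (∀ T : DTree 0 n, ∀ i j : ℕ, (i, j) ∈ T.edus ↔ (i, j, j) ∈ T.splits) := by
  exact ⟨fun T₁ T₂ => DTree.splits_inj T₁ T₂, fun T i j => DTree.mem_edus_iff T i j⟩
end

section
/- In a binary discourse tree over [0,n] whose EDUs partition [0,n], the proper split points coincide with the interior EDU boundaries: the set {k : (i,j,k) ∈ C(DT) with i < k < j} equals the set of endpoints of EDUs other than 0 and n, and for each such interior EDU boundary k there is exactly one proper splitting decision in C(DT) that splits at k. -/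
lemma DTree.splits_bound : ∀ {i j : ℕ} (T : DTree i j) {a b c : ℕ},
    (a, b, c) ∈ T.splits → i ≤ a ∧ b ≤ j ∧ a < b
  | _, _, .leaf i j h, a, b, c, hm => by
      simp only [DTree.splits, Finset.mem_singleton, Prod.mk.injEq] at hm
      obtain ⟨rfl, rfl, rfl⟩ := hm; exact ⟨le_rfl, le_rfl, h⟩
  | _, _, .node i k j h1 h2 l r, a, b, c, hm => by
      simp only [DTree.splits, Finset.mem_insert, Finset.mem_union, Prod.mk.injEq] at hm
      rcases hm with ⟨rfl, rfl, rfl⟩ | h | h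
      · exact ⟨le_rfl, le_rfl, h1.trans h2⟩
      · obtain ⟨h3, h4, h5⟩ := l.splits_bound h
        exact ⟨h3, h4.trans h2.le, h5⟩
      · obtain ⟨h3, h4, h5⟩ := r.splits_bound h
        exact ⟨h1.le.trans h3, h4, h5⟩

lemma DTree.edus_bound : ∀ {i j : ℕ} (T : DTree i j) {a b : ℕ},
    (a, b) ∈ T.edus → i ≤ a ∧ b ≤ j ∧ a < b
  | _, _, .leaf i j h, a, b, hm => by
      simp only [DTree.edus, Finset.mem_singleton, Prod.mk.injEq] at hm
      obtain ⟨rfl, rfl⟩ := hm; exact ⟨le_rfl, le_rfl, h⟩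
  | _, _, .node i k j h1 h2 l r, a, b, hm => by
      simp only [DTree.edus, Finset.mem_union] at hm
      rcases hm with h | h
      · obtain ⟨h3, h4, h5⟩ := l.edus_bound h
        exact ⟨h3, h4.trans h2.le, h5⟩
      · obtain ⟨h3, h4, h5⟩ := r.edus_bound h
        exact ⟨h1.le.trans h3, h4, h5⟩

lemma DTree.edus_last : ∀ {i j : ℕ} (T : DTree i j), ∃ a, (a, j) ∈ T.edus
  | _, _, .leaf i j _ => ⟨i, by simp [DTree.edus]⟩
  | _, _, .node i k j _ _ l r => by
      obtain ⟨a, ha⟩ := r.edus_last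
      exact ⟨a, by simp only [DTree.edus, Finset.mem_union]; exact Or.inr ha⟩

lemma DTree.proper_to_edu : ∀ {i j : ℕ} (T : DTree i j) {a b k : ℕ},
    (a, b, k) ∈ T.splits → a < k → k < b →
    ∃ p q, (p, q) ∈ T.edus ∧ (k = p ∨ k = q)
  | _, _, .leaf i j _, a, b, k, hm, _, hk2 => by
      simp only [DTree.splits, Finset.mem_singleton, Prod.mk.injEq] at hm
      obtain ⟨rfl, rfl, rfl⟩ := hm; exact absurd hk2 (lt_irrefl _)
  | _, _, .node i m j h1 h2 l r, a, b, k, hm, hk1, hk2 => by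
      simp only [DTree.splits, Finset.mem_insert, Finset.mem_union, Prod.mk.injEq] at hm
      rcases hm with ⟨rfl, rfl, rfl⟩ | h | h
      · obtain ⟨p, hp⟩ := l.edus_last
        exact ⟨p, k, by simp only [DTree.edus, Finset.mem_union]; exact Or.inl hp,
          Or.inr rfl⟩
      · obtain ⟨p, q, hpq, hk⟩ := l.proper_to_edu h hk1 hk2
        exact ⟨p, q, by simp only [DTree.edus, Finset.mem_union]; exact Or.inl hpq, hk⟩
      · obtain ⟨p, q, hpq, hk⟩ := r.proper_to_edu h hk1 hk2
        exact ⟨p, q, by simp only [DTree.edus, Finset.mem_union]; exact Or.inr hpq, hk⟩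

lemma DTree.edu_to_proper : ∀ {i j : ℕ} (T : DTree i j) {k : ℕ},
    i < k → k < j → (∃ p q, (p, q) ∈ T.edus ∧ (k = p ∨ k = q)) →
    ∃ a b, (a, b, k) ∈ T.splits ∧ a < k ∧ k < b
  | _, _, .leaf i j _, k, hk1, hk2, ⟨p, q, hpq, hk⟩ => by
      simp only [DTree.edus, Finset.mem_singleton, Prod.mk.injEq] at hpq
      obtain ⟨rfl, rfl⟩ := hpq
      rcases hk with rfl | rfl
      · exact absurd hk1 (lt_irrefl _)
      · exact absurd hk2 (lt_irrefl _)
  | _, _, .node i m j h1 h2 l r, k, hk1, hk2, ⟨p, q, hpq, hk⟩ => by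
      rcases eq_or_ne k m with rfl | hne
      · exact ⟨i, j, by simp [DTree.splits], hk1, hk2⟩
      · simp only [DTree.edus, Finset.mem_union] at hpq
        rcases hpq with h | h
        · obtain ⟨hb1, hb2, hb3⟩ := l.edus_bound h
          have hkm : k < m := by
            rcases hk with rfl | rfl
            · exact lt_of_le_of_ne (hb3.le.trans hb2) hne
            · exact lt_of_le_of_ne hb2 hne
          obtain ⟨a, b, hab, ha, hb⟩ := l.edu_to_proper hk1 hkm ⟨p, q, h, hk⟩
          exact ⟨a, b, by
            simp only [DTree.splits, Finset.mem_insert, Finset.mem_union]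
            exact Or.inr (Or.inl hab), ha, hb⟩
        · obtain ⟨hb1, hb2, hb3⟩ := r.edus_bound h
          have hkm : m < k := by
            rcases hk with rfl | rfl
            · exact lt_of_le_of_ne hb1 (Ne.symm hne)
            · exact lt_of_le_of_ne (hb1.trans hb3.le) (Ne.symm hne)
          obtain ⟨a, b, hab, ha, hb⟩ := r.edu_to_proper hkm hk2 ⟨p, q, h, hk⟩
          exact ⟨a, b, by
            simp only [DTree.splits, Finset.mem_insert, Finset.mem_union]
            exact Or.inr (Or.inr hab), ha, hb⟩

lemma DTree.proper_unique : ∀ {i j : ℕ} (T : DTree i j) {a b a' b' k : ℕ},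
    (a, b, k) ∈ T.splits → a < k → k < b →
    (a', b', k) ∈ T.splits → a' < k → k < b' →
    a = a' ∧ b = b'
  | _, _, .leaf i j _, a, b, a', b', k, hm, _, hk2, _, _, _ => by
      simp only [DTree.splits, Finset.mem_singleton, Prod.mk.injEq] at hm
      obtain ⟨rfl, rfl, rfl⟩ := hm; exact absurd hk2 (lt_irrefl _)
  | _, _, .node i m j h1 h2 l r, a, b, a', b', k, hm, hk1, hk2, hm', hk1', hk2' => by
      have key : ∀ {x y : ℕ}, (x, y, k) ∈ l.splits → x < k → k < y → k < m := by
        intro x y hx _ hy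
        exact lt_of_lt_of_le hy (l.splits_bound hx).2.1
      have key' : ∀ {x y : ℕ}, (x, y, k) ∈ r.splits → x < k → k < y → m < k := by
        intro x y hx hy _
        exact lt_of_le_of_lt (r.splits_bound hx).1 hy
      simp only [DTree.splits, Finset.mem_insert, Finset.mem_union, Prod.mk.injEq] at hm hm'
      rcases hm with ⟨ha, hb, hkm⟩ | h | h <;>
        rcases hm' with ⟨ha', hb', hkm'⟩ | h' | h'
      · exact ⟨ha.trans ha'.symm, hb.trans hb'.symm⟩
      · exact absurd (hkm ▸ key h' hk1' hk2') (lt_irrefl _)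
      · exact absurd (hkm ▸ key' h' hk1' hk2') (lt_irrefl _)
      · exact absurd (hkm' ▸ key h hk1 hk2) (lt_irrefl _)
      · exact l.proper_unique h hk1 hk2 h' hk1' hk2'
      · exact absurd ((key h hk1 hk2).trans (key' h' hk1' hk2')) (lt_irrefl _)
      · exact absurd (hkm' ▸ key' h hk1 hk2) (lt_irrefl _)
      · exact absurd ((key h' hk1' hk2').trans (key' h hk1 hk2)) (lt_irrefl _)
      · exact r.proper_unique h hk1 hk2 h' hk1' hk2'

/-- In a binary discourse tree over `[0, n]` (whose EDUs partition
`[0, n]`), the proper split points coincide with the interior EDU boundaries: `k`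
is the split point of some proper splitting decision `(i, j, k)` (with `i < k < j`)
of `C(DT)` if and only if `k` is an endpoint of some EDU other than `0` and `n`;
moreover, for each such interior EDU boundary `k` there is exactly one proper
splitting decision in `C(DT)` that splits at `k`. -/
theorem dtree_proper_splits_eq_interior_boundaries (n : ℕ) (hn : 1 ≤ n)
    (T : DTree 0 n) :
    (∀ k : ℕ,
      (∃ i j : ℕ, (i, j, k) ∈ T.splits ∧ i < k ∧ k < j) ↔
      (k ≠ 0 ∧ k ≠ n ∧ ∃ a b : ℕ, (a, b) ∈ T.edus ∧ (k = a ∨ k = b))) ∧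
    (∀ k i j i' j' : ℕ,
      (i, j, k) ∈ T.splits → i < k → k < j →
      (i', j', k) ∈ T.splits → i' < k → k < j' →
      i = i' ∧ j = j') := by
  refine ⟨fun k => ⟨?_, ?_⟩, fun k i j i' j' h1 h2 h3 h4 h5 h6 =>
    T.proper_unique h1 h2 h3 h4 h5 h6⟩
  · rintro ⟨i, j, hm, hk1, hk2⟩
    obtain ⟨hb1, hb2, _⟩ := T.splits_bound hm
    obtain ⟨p, q, hpq, hk⟩ := T.proper_to_edu hm hk1 hk2
    exact ⟨(lt_of_le_of_lt hb1 hk1).ne', (lt_of_lt_of_le hk2 hb2).ne, p, q, hpq, hk⟩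
  · rintro ⟨hk0, hkn, p, q, hpq, hk⟩
    obtain ⟨hb1, hb2, hb3⟩ := T.edus_bound hpq
    have h0k : 0 < k := Nat.pos_of_ne_zero hk0
    have hkn' : k < n := by
      rcases hk with rfl | rfl
      · exact lt_of_le_of_ne (hb3.le.trans hb2) hkn
      · exact lt_of_le_of_ne hb2 hkn
    exact T.edu_to_proper h0k hkn' ⟨p, q, hpq, hk⟩
end
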